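/- Assume 0 < α < 1, a ≠ c, a + c + j ≠ 0, either (-N < a + c < -j + 1 and |c - a| > j) or ((a + c < -N + 1 or 0 < a + c) and |c - a| < 1), and that the Pochhammer symbols (a+c)_{j+1}, (c-a)_{j+1}, (a-c)_{j+1}, (2a+1)_j, (2c+1)_j, (a)_j, (2a+1+j)_j, (a-c+1)_j, (a+c+j+1)_j, (c)_j, (2c+1+j)_j, (c-a+1)_j are all nonzero. Then the odd-case para-Racah weights satisfy Σ_{s=0}^{j} w_{2s} = 1 - α and Σ_{s=0}^{j} w_{2s+1} = α. -/

import Mathlib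

open Filter Topology Polynomial

noncomputable section

/-- The recurrence coefficient `bₙ` of the para-Racah polynomials, odd case `N = 2j+1`. -/
def bOdd (j : ℕ) (a c α : ℝ) (n : ℕ) : ℝ :=
  if n = j then
    -a ^ 2 - (j : ℝ) * (1 + a - c) * (1 + a + c + j) / 2 + α * (a - c) * (1 + (j : ℝ)) * (a + c + j)
  else if n = j + 1 then
    -a ^ 2 - (j : ℝ) * (1 + a - c) * (1 + a + c + j) / 2
      + (1 - α) * (a - c) * (1 + (j : ℝ)) * (a + c + j)
  else
    -(a * (a + j) + c * (c + j) + (n : ℝ) * ((2 * (j : ℝ) + 1) - n)) / 2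

/-- The recurrence coefficient `uₙ` of the para-Racah polynomials, odd case `N = 2j+1`. -/
def uOdd (j : ℕ) (a c α : ℝ) (n : ℕ) : ℝ :=
  if n = j + 1 then
    α * (1 - α) * (a - c) ^ 2 * (1 + (j : ℝ)) ^ 2 * (a + c + j) ^ 2
  else
    (n : ℝ) * ((2 * (j : ℝ) + 1) + 1 - n) * ((2 * (j : ℝ) + 1) - n + a + c) * ((n : ℝ) - 1 + a + c)
        * (((n : ℝ) - j - 1) ^ 2 - (a - c) ^ 2) /
      (4 * ((2 * (j : ℝ) + 1) - 2 * n) * ((2 * (j : ℝ) + 1) - 2 * n + 2))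

/-- Monic orthogonal polynomial sequence from a three-term recurrence:
`monicOPS b u n = (P_{n-1}, P_n)` with `P₋₁ = 0`, `P₀ = 1`,
`P_{n+1}(y) = (y - bₙ) Pₙ(y) - uₙ P_{n-1}(y)`. -/
def monicOPS (b u : ℕ → ℝ) : ℕ → Polynomial ℝ × Polynomial ℝ
  | 0 => (0, 1)
  | n + 1 =>
    ((monicOPS b u n).2,
      (X - C (b n)) * (monicOPS b u n).2 - C (u n) * (monicOPS b u n).1)

/-- The monic para-Racah polynomial `Pₙ`, odd case `N = 2j+1`. -/
def paraRacahOdd (j : ℕ) (a c α : ℝ) (n : ℕ) : Polynomial ℝ :=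
  (monicOPS (bOdd j a c α) (uOdd j a c α) n).2

/-- The Pochhammer symbol `(z)ₖ = z (z+1) ⋯ (z+k-1)`. -/
def poch (z : ℝ) (k : ℕ) : ℝ := ∏ i ∈ Finset.range k, (z + i)

/-- The quadratic bi-lattice: `y_{2s} = -(s+a)²`, `y_{2s+1} = -(s+c)²`. -/
def biLattice (a c : ℝ) (s : ℕ) : ℝ :=
  if s % 2 = 0 then -(((s / 2 : ℕ) : ℝ) + a) ^ 2 else -(((s / 2 : ℕ) : ℝ) + c) ^ 2

/-- The constant `κ_N`, odd case `N = 2j+1`. -/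
def kappaOdd (j : ℕ) (a c : ℝ) : ℝ :=
  poch (a - c - j) (2 * j + 1) * poch (a + c) (2 * j + 1) /
    (2 * (-1 : ℝ) ^ (j + 1) * (Nat.choose (2 * j) j) * (Nat.factorial j))

/-- The weights of the para-Racah polynomials, odd case `N = 2j+1`. -/
def wOdd (j : ℕ) (a c α : ℝ) (s : ℕ) : ℝ :=
  if s % 2 = 0 then
    2 * (1 - α) * kappaOdd j a c * poch (-(j : ℝ)) (s / 2) * poch (2 * a) (s / 2)
        * poch (a + 1) (s / 2) * poch (a - c - j) (s / 2) * poch (a + c) (s / 2) /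
      (poch (a + c) (j + 1) * poch (c - a) (j + 1) * poch (2 * a + 1) j
        * (Nat.factorial (s / 2)) * poch a (s / 2) * poch (2 * a + 1 + j) (s / 2)
        * poch (a - c + 1) (s / 2) * poch (a + c + j + 1) (s / 2))
  else
    -2 * α * kappaOdd j a c * poch (-(j : ℝ)) (s / 2) * poch (2 * c) (s / 2)
        * poch (c + 1) (s / 2) * poch (c - a - j) (s / 2) * poch (a + c) (s / 2) /
      (poch (a + c) (j + 1) * poch (a - c) (j + 1) * poch (2 * c + 1) j
        * (Nat.factorial (s / 2)) * poch c (s / 2) * poch (2 * c + 1 + j) (s / 2)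
        * poch (c - a + 1) (s / 2) * poch (a + c + j + 1) (s / 2))



lemma poch_zero' (z : ℝ) : poch z 0 = 1 := by simp [poch]

lemma poch_one' (z : ℝ) : poch z 1 = z := by simp [poch]

lemma poch_succ' (z : ℝ) (k : ℕ) : poch z (k+1) = poch z k * (z + k) := by
  simp [poch, Finset.prod_range_succ]

lemma poch_succ_left' (z : ℝ) (k : ℕ) : poch z (k+1) = z * poch (z+1) k := by
  unfold poch
  rw [Finset.prod_range_succ',
    Finset.prod_congr rfl (fun i _ => show z + ((i:ℕ)+1 : ℕ) = (z+1) + i from by push_cast; ring)]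
  push_cast
  ring

lemma poch_mul' (z : ℝ) (k : ℕ) : z * poch (z+1) k = poch z k * (z + k) := by
  rw [← poch_succ_left', poch_succ']

lemma poch_add' (z : ℝ) (m n : ℕ) : poch z (m+n) = poch z m * poch (z + m) n := by
  unfold poch
  rw [Finset.prod_range_add]
  congr 1
  exact Finset.prod_congr rfl (fun i _ => by push_cast; ring)

lemma poch_ne_zero_of_le' {z : ℝ} {m : ℕ} (h : poch z m ≠ 0) {k : ℕ} (hk : k ≤ m) :
    poch z k ≠ 0 := by
  obtain ⟨d, rfl⟩ := Nat.exists_eq_add_of_le hk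
  rw [poch_add'] at h
  exact left_ne_zero_of_mul h

lemma poch_factor_ne_zero' {z : ℝ} {m : ℕ} (h : poch z m ≠ 0) {i : ℕ} (hi : i < m) :
    z + i ≠ 0 := by
  unfold poch at h
  exact Finset.prod_ne_zero_iff.mp h i (Finset.mem_range.mpr hi)

lemma poch_reflect' (k : ℕ) : ∀ z : ℝ, poch z k = (-1)^k * poch (-z - k + 1) k := by
  induction k with
  | zero => simp [poch]
  | succ k ih =>
    intro z
    rw [poch_succ_left', ih (z+1), poch_succ',
      show (-(z+1) - (k:ℝ) + 1) = -z - ((k:ℕ):ℝ) - 1 + 1 by ring,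
      show (-z - ((k+1:ℕ):ℝ) + 1) = -z - ((k:ℕ):ℝ) - 1 + 1 by push_cast; ring]
    push_cast
    ring

lemma poch_neg_nat' (n : ℕ) : poch (-(n:ℝ)) (n+1) = 0 := by
  unfold poch
  apply Finset.prod_eq_zero (Finset.self_mem_range_succ n)
  simp

lemma poch_nat_factorial' (k : ℕ) : ∀ m : ℕ,
    (k.factorial : ℝ) * poch ((k:ℝ)+1) m = ((k+m).factorial : ℝ) := by
  intro m
  induction m with
  | zero => simp [poch]
  | succ m ih =>
    rw [poch_succ', ← mul_assoc, ih, show k + (m+1) = (k+m)+1 by omega, Nat.factorial_succ]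
    push_cast
    ring
lemma wz_shape (A f QA QB QC P0 PA PB PC e1 q2 d1 d2 qb qc r4 v1 v2 v5 s1 s2 w1 w2 xA xB xC y1 y2 : ℝ)
    (hA : A ≠ 0) (hf : f ≠ 0) (hQA : QA ≠ 0) (hQB : QB ≠ 0) (hQC : QC ≠ 0)
    (he1 : e1 ≠ 0) (hq2 : q2 ≠ 0) (hd1 : d1 ≠ 0) (hd2 : d2 ≠ 0) (hqb : qb ≠ 0) (hqc : qc ≠ 0)
    (hs2 : s2 ≠ 0)
    (hkey : v1*v2*e1*(d1*d2*qb*qc) - e1*r4*(v1*v5)*(q2*qb*qc)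
      = e1*w1*w2*v5*(xA*xB*xC) - e1*s1*y1*y2*(q2*qb*qc)) :
    v1*(v2*P0)*PA*PB*PC/(A*f*(QA*q2/e1)*QB*QC)
      - e1*r4/(d1*d2)*(v1*(P0*v5)*PA*PB*PC/(A*f*QA*QB*QC))
    = e1*s2*w1*w2*(P0*v5)*(PA*xA)*(PB*xB)*(PC*xC)/(d1*d2*A*(s2*f)*(QA*q2)*(QB*qb)*(QC*qc))
      - e1*s1*y1*y2*P0*PA*PB*PC/(d1*d2*A*f*QA*QB*QC) := by
  have key2 : v1*v2*e1/q2 - e1*r4/(d1*d2)*(v1*v5)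
      = e1*w1*w2*v5*(xA*xB*xC)/(d1*d2*q2*qb*qc) - e1*s1*y1*y2/(d1*d2) := by
    field_simp
    apply mul_left_cancel₀ he1
    linear_combination hkey
  have T1 : v1*(v2*P0)*PA*PB*PC/(A*f*(QA*q2/e1)*QB*QC)
      = (v1*v2*e1/q2) * (P0*PA*PB*PC/(A*f*QA*QB*QC)) := by
    field_simp
  have T2 : v1*(P0*v5)*PA*PB*PC/(A*f*QA*QB*QC)
      = (v1*v5)*(P0*PA*PB*PC/(A*f*QA*QB*QC)) := by ring
  have T3 : e1*s2*w1*w2*(P0*v5)*(PA*xA)*(PB*xB)*(PC*xC)/(d1*d2*A*(s2*f)*(QA*q2)*(QB*qb)*(QC*qc))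
      = (e1*w1*w2*v5*(xA*xB*xC)/(d1*d2*q2*qb*qc)) * (P0*PA*PB*PC/(A*f*QA*QB*QC)) := by
    rw [div_mul_div_comm, div_eq_div_iff (by simp [*]) (by simp [*])]
    ring
  have T4 : e1*s1*y1*y2*P0*PA*PB*PC/(d1*d2*A*f*QA*QB*QC)
      = (e1*s1*y1*y2/(d1*d2))*(P0*PA*PB*PC/(A*f*QA*QB*QC)) := by
    field_simp
  rw [T1, T2, T3, T4]
  linear_combination (P0*PA*PB*PC/(A*f*QA*QB*QC)) * key2

lemma wz_top_shape (A f Q QB QC P PA PB PC e1 q d1 d2 u1 u2 m1 m2 m3 : ℝ)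
    (hA : A ≠ 0) (hf : f ≠ 0) (hQ : Q ≠ 0) (hQB : QB ≠ 0) (hQC : QC ≠ 0)
    (he1 : e1 ≠ 0) (hq : q ≠ 0) (hd1 : d1 ≠ 0) (hd2 : d2 ≠ 0)
    (hkey : u1*u2*(d1*d2) + m1*m2*m3*q = 0) :
    u1*(u2*P)*PA*PB*PC/(A*f*(Q*q)*QB*QC)
      + e1*m1*m2*m3*P*PA*PB*PC/(d1*d2*A*f*(e1*Q)*QB*QC) = 0 := by
  have T1 : u1*(u2*P)*PA*PB*PC/(A*f*(Q*q)*QB*QC)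
      = (u1*u2/q) * (P*PA*PB*PC/(A*f*Q*QB*QC)) := by
    field_simp
  have T2 : e1*m1*m2*m3*P*PA*PB*PC/(d1*d2*A*f*(e1*Q)*QB*QC)
      = (m1*m2*m3/(d1*d2)) * (P*PA*PB*PC/(A*f*Q*QB*QC)) := by
    field_simp
  rw [T1, T2]
  have key2 : u1*u2/q + m1*m2*m3/(d1*d2) = 0 := by
    rw [div_add_div _ _ hq (mul_ne_zero hd1 hd2), _root_.div_eq_zero_iff]
    left
    linear_combination hkey
  linear_combination (P*PA*PB*PC/(A*f*Q*QB*QC)) * key2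

noncomputable def tD (A B C : ℝ) (n s : ℕ) : ℝ :=
  (A + 2*s) * poch (-(n:ℝ)) s * poch A s * poch B s * poch C s /
    (A * (Nat.factorial s) * poch (1+A+n) s * poch (1+A-B) s * poch (1+A-C) s)

noncomputable def gD (A B C : ℝ) (n : ℕ) : ℕ → ℝ
  | 0 => 0
  | (s+1) => (1+A+(n:ℝ)) * ((s:ℝ)+1) * ((s:ℝ)+1+A-B) * ((s:ℝ)+1+A-C) * poch (-(n:ℝ)) s
      * poch A (s+1) * poch B (s+1) * poch C (s+1) /
      ((1+A-B+(n:ℝ)) * (1+A-C+(n:ℝ)) * A * (Nat.factorial (s+1)) * poch (1+A+(n:ℝ)) (s+1)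
        * poch (1+A-B) (s+1) * poch (1+A-C) (s+1))

lemma poch_ne_zero_of_factors {z : ℝ} {m : ℕ} (h : ∀ i : ℕ, i < m → z + i ≠ 0) :
    poch z m ≠ 0 := by
  unfold poch
  rw [Finset.prod_ne_zero_iff]
  exact fun i hi => h i (Finset.mem_range.mp hi)

lemma wz_zero (A B C : ℝ) (n : ℕ) (hA : A ≠ 0) (h1 : 1+A+(n:ℝ) ≠ 0)
    (hB0 : 1+A-B ≠ 0) (hC0 : 1+A-C ≠ 0)
    (h3 : 1+A-B+(n:ℝ) ≠ 0) (h4 : 1+A-C+(n:ℝ) ≠ 0) :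
    tD A B C (n+1) 0 - (1+A+(n:ℝ))*(1+A-B-C+(n:ℝ))/((1+A-B+(n:ℝ))*(1+A-C+(n:ℝ))) * tD A B C n 0
      = gD A B C n 1 - gD A B C n 0 := by
  show _ = gD A B C n (0+1) - _
  simp only [tD, gD, poch_zero', poch_one']
  norm_num
  simp only [poch_one']
  rw [div_self hA]
  field_simp
  ring

set_option maxHeartbeats 2000000 in
lemma wz_step (A B C : ℝ) (n s : ℕ) (hA : A ≠ 0) (h1 : 1+A+(n:ℝ) ≠ 0)
    (h2 : 1+A+(n:ℝ)+(s:ℝ)+1 ≠ 0)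
    (hQA : poch (1+A+(n:ℝ)) (s+1) ≠ 0) (hQB : poch (1+A-B) (s+1) ≠ 0)
    (hQC : poch (1+A-C) (s+1) ≠ 0)
    (h3 : 1+A-B+(n:ℝ) ≠ 0) (h4 : 1+A-C+(n:ℝ) ≠ 0)
    (h5 : 1+A-B+(s:ℝ)+1 ≠ 0) (h6 : 1+A-C+(s:ℝ)+1 ≠ 0) :
    tD A B C (n+1) (s+1)
      - (1+A+(n:ℝ))*(1+A-B-C+(n:ℝ))/((1+A-B+(n:ℝ))*(1+A-C+(n:ℝ))) * tD A B C n (s+1)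
      = gD A B C n (s+2) - gD A B C n (s+1) := by
  show _ = gD A B C n ((s+1)+1) - gD A B C n (s+1)
  simp only [tD, gD]
  push_cast
  have e1 : poch (-((n:ℝ) + 1)) (s+1) = (-(n:ℝ)-1) * poch (-(n:ℝ)) s := by
    rw [poch_succ_left', show (-((n:ℝ)+1)+1) = -(n:ℝ) from by ring]; ring
  have e2 : poch (1 + A + ((n:ℝ) + 1)) (s+1)
      = poch (1+A+(n:ℝ)) (s+1) * (1+A+(n:ℝ)+(s:ℝ)+1) / (1+A+(n:ℝ)) := by
    rw [show (1 + A + ((n:ℝ) + 1)) = (1+A+(n:ℝ))+1 from by ring, eq_div_iff h1]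
    have := poch_mul' (1+A+(n:ℝ)) (s+1)
    push_cast at this
    linear_combination this
  have e3 : poch (-(n:ℝ)) (s+1) = poch (-(n:ℝ)) s * (-(n:ℝ) + (s:ℝ)) := poch_succ' _ _
  have e4 : poch A (s+1+1) = poch A (s+1) * (A + ((s:ℝ)+1)) := by
    rw [poch_succ']; push_cast; ring
  have e5 : poch B (s+1+1) = poch B (s+1) * (B + ((s:ℝ)+1)) := by
    rw [poch_succ']; push_cast; ring
  have e6 : poch C (s+1+1) = poch C (s+1) * (C + ((s:ℝ)+1)) := by
    rw [poch_succ']; push_cast; ring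
  have e7 : poch (1+A+(n:ℝ)) (s+1+1) = poch (1+A+(n:ℝ)) (s+1) * (1+A+(n:ℝ)+(s:ℝ)+1) := by
    rw [poch_succ']; push_cast; ring
  have e8 : poch (1+A-B) (s+1+1) = poch (1+A-B) (s+1) * (1+A-B+(s:ℝ)+1) := by
    rw [poch_succ']; push_cast; ring
  have e9 : poch (1+A-C) (s+1+1) = poch (1+A-C) (s+1) * (1+A-C+(s:ℝ)+1) := by
    rw [poch_succ']; push_cast; ring
  have eF : (((s+1+1).factorial : ℕ) : ℝ) = (((s:ℝ)+1)+1) * ((s+1).factorial : ℕ) := by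
    rw [Nat.factorial_succ]; push_cast; ring
  rw [e1, e2, e3, e4, e5, e6, e7, e8, e9, eF]
  have hf : (((s+1).factorial : ℕ) : ℝ) ≠ 0 := Nat.cast_ne_zero.mpr (Nat.factorial_ne_zero _)
  have hs2 : (((s:ℝ)+1)+1) ≠ 0 := by positivity
  exact wz_shape A _ _ _ _ _ _ _ _ _ _ _ _ _ _ _ _ _ _ _ _ _ _ _ _ _ _ _
    hA hf hQA hQB hQC h1 h2 h3 h4 h5 h6 hs2 (by ring)

lemma wz_top (A B C : ℝ) (n : ℕ) (hA : A ≠ 0) (h1 : 1+A+(n:ℝ) ≠ 0)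
    (hq : 2+A+(n:ℝ)+(n:ℝ) ≠ 0) (hQ : poch (2+A+(n:ℝ)) n ≠ 0)
    (hQB : poch (1+A-B) (n+1) ≠ 0) (hQC : poch (1+A-C) (n+1) ≠ 0)
    (h3 : 1+A-B+(n:ℝ) ≠ 0) (h4 : 1+A-C+(n:ℝ) ≠ 0) :
    tD A B C (n+1) (n+1) + gD A B C n (n+1) = 0 := by
  show tD A B C (n+1) (n+1) + gD A B C n (n+1) = 0
  simp only [tD, gD]
  push_cast
  have e1 : poch (-((n:ℝ) + 1)) (n+1) = (-((n:ℝ)+1)) * poch (-(n:ℝ)) n := by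
    rw [poch_succ_left', show (-((n:ℝ)+1)+1) = -(n:ℝ) from by ring]
  have e2 : poch (1 + A + ((n:ℝ) + 1)) (n+1) = poch (2+A+(n:ℝ)) n * (2+A+(n:ℝ)+(n:ℝ)) := by
    rw [show (1 + A + ((n:ℝ) + 1)) = 2+A+(n:ℝ) from by ring, poch_succ']
  have e3 : poch (1+A+(n:ℝ)) (n+1) = (1+A+(n:ℝ)) * poch (2+A+(n:ℝ)) n := by
    rw [poch_succ_left', show (1+A+(n:ℝ)+1) = 2+A+(n:ℝ) from by ring]
  rw [e1, e2, e3]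
  have hf : (((n+1).factorial : ℕ) : ℝ) ≠ 0 := Nat.cast_ne_zero.mpr (Nat.factorial_ne_zero _)
  exact wz_top_shape A _ _ _ _ _ _ _ _ _ _ _ _ _ _ _ _ _
    hA hf hQ hQB hQC h1 hq h3 h4 (by ring)

lemma tD_top_zero (A B C : ℝ) (n : ℕ) : tD A B C n (n+1) = 0 := by
  simp [tD, poch_neg_nat']

lemma gD_top_zero (A B C : ℝ) (n : ℕ) : gD A B C n (n+2) = 0 := by
  show gD A B C n ((n+1)+1) = 0
  simp [gD, poch_neg_nat']

lemma dougall_step (A B C : ℝ) (j n : ℕ) (hn : n+1 ≤ j) (hA : A ≠ 0)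
    (hfacs : ∀ k : ℕ, 1 ≤ k → k ≤ 2*j → A + (k:ℝ) ≠ 0)
    (hB : ∀ i : ℕ, i < j → 1+A-B+(i:ℝ) ≠ 0) (hC : ∀ i : ℕ, i < j → 1+A-C+(i:ℝ) ≠ 0) :
    ∑ s ∈ Finset.range (n+2), tD A B C (n+1) s
      = (1+A+(n:ℝ))*(1+A-B-C+(n:ℝ))/((1+A-B+(n:ℝ))*(1+A-C+(n:ℝ)))
        * ∑ s ∈ Finset.range (n+1), tD A B C n s := by
  have h1 : 1+A+(n:ℝ) ≠ 0 := by
    intro h; apply hfacs (n+1) (by omega) (by omega); push_cast; linarith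
  have h3 : 1+A-B+(n:ℝ) ≠ 0 := hB n (by omega)
  have h4 : 1+A-C+(n:ℝ) ≠ 0 := hC n (by omega)
  set r : ℝ := (1+A+(n:ℝ))*(1+A-B-C+(n:ℝ))/((1+A-B+(n:ℝ))*(1+A-C+(n:ℝ))) with hr
  have key : ∀ s ∈ Finset.range (n+2),
      tD A B C (n+1) s - r * tD A B C n s = gD A B C n (s+1) - gD A B C n s := by
    intro s hs
    have hsle : s ≤ n+1 := by
      have := Finset.mem_range.mp hs; omega
    match s with
    | 0 =>
      exact wz_zero A B C n hA h1 (by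
          have := hB 0 (by omega); push_cast at this; intro h; exact this (by linarith))
        (by have := hC 0 (by omega); push_cast at this; intro h; exact this (by linarith)) h3 h4
    | (t+1) =>
      by_cases ht : t = n
      · subst ht
        have hza : tD A B C t (t+1) = 0 := tD_top_zero A B C t
        have hzb : gD A B C t (t+2) = 0 := gD_top_zero A B C t
        have htop : tD A B C (t+1) (t+1) + gD A B C t (t+1) = 0 := by
          apply wz_top A B C t hA h1
          · intro h; apply hfacs (2*t+2) (by omega) (by omega); push_cast; linarith
          · apply poch_ne_zero_of_factors
            intro i hi h
            apply hfacs (t+2+i) (by omega) (by omega)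
            push_cast; linarith
          · apply poch_ne_zero_of_factors
            intro i hi h
            apply hB i (by omega)
            push_cast; linarith
          · apply poch_ne_zero_of_factors
            intro i hi h
            apply hC i (by omega)
            push_cast; linarith
          · exact h3
          · exact h4
        rw [show t+1+1 = t+2 from rfl, hza, hzb]
        linarith [htop]
      · have htn : t < n := by omega
        apply wz_step A B C n t hA h1
        · intro h; apply hfacs (n+t+2) (by omega) (by omega); push_cast; linarith
        · apply poch_ne_zero_of_factors
          intro i hi h
          apply hfacs (n+1+i) (by omega) (by omega)
          push_cast; linarith
        · apply poch_ne_zero_of_factors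
          intro i hi h
          apply hB i (by omega)
          push_cast; linarith
        · apply poch_ne_zero_of_factors
          intro i hi h
          apply hC i (by omega)
          push_cast; linarith
        · exact h3
        · exact h4
        · intro h; apply hB (t+1) (by omega); push_cast; linarith
        · intro h; apply hC (t+1) (by omega); push_cast; linarith
  have tele : ∑ s ∈ Finset.range (n+2), (tD A B C (n+1) s - r * tD A B C n s) = 0 := by
    rw [Finset.sum_congr rfl key, Finset.sum_range_sub (gD A B C n), gD_top_zero]
    simp [gD]
  rw [Finset.sum_sub_distrib, ← Finset.mul_sum] at tele
  have hsplit : ∑ s ∈ Finset.range (n+2), tD A B C n s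
      = ∑ s ∈ Finset.range (n+1), tD A B C n s := by
    rw [Finset.sum_range_succ, tD_top_zero, add_zero]
  rw [hsplit] at tele
  linarith [tele]

lemma dougall (A B C : ℝ) (j : ℕ) (hA : A ≠ 0)
    (hfacs : ∀ k : ℕ, 1 ≤ k → k ≤ 2*j → A + (k:ℝ) ≠ 0)
    (hB : ∀ i : ℕ, i < j → 1+A-B+(i:ℝ) ≠ 0) (hC : ∀ i : ℕ, i < j → 1+A-C+(i:ℝ) ≠ 0) :
    ∀ n, n ≤ j → ∑ s ∈ Finset.range (n+1), tD A B C n s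
      = poch (1+A) n * poch (1+A-B-C) n / (poch (1+A-B) n * poch (1+A-C) n) := by
  intro n
  induction n with
  | zero =>
    intro _
    simp [tD, poch_zero']
    exact hA
  | succ n ih =>
    intro h
    rw [dougall_step A B C j n h hA hfacs hB hC, ih (by omega)]
    rw [poch_succ' (1+A) n, poch_succ' (1+A-B-C) n, poch_succ' (1+A-B) n, poch_succ' (1+A-C) n]
    have hU : poch (1+A-B) n ≠ 0 := poch_ne_zero_of_factors (fun i hi => hB i (by omega))
    have hV : poch (1+A-C) n ≠ 0 := poch_ne_zero_of_factors (fun i hi => hC i (by omega))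
    have h3 : 1+A-B+(n:ℝ) ≠ 0 := hB n (by omega)
    have h4 : 1+A-C+(n:ℝ) ≠ 0 := hC n (by omega)
    field_simp

set_option maxHeartbeats 1000000 in
theorem paraRacahOdd_weight_sums (j : ℕ) (hj : 1 ≤ j) (a c α : ℝ)
    (hα₀ : 0 < α) (hα₁ : α < 1) (hac : a ≠ c) (hacj : a + c + (j : ℝ) ≠ 0)
    (hcase :
      (-(2 * (j : ℝ) + 1) < a + c ∧ a + c < -(j : ℝ) + 1 ∧ |c - a| > (j : ℝ)) ∨
      ((a + c < -(2 * (j : ℝ) + 1) + 1 ∨ 0 < a + c) ∧ |c - a| < 1))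
    (hp₁ : poch (a + c) (j + 1) ≠ 0) (hp₂ : poch (c - a) (j + 1) ≠ 0)
    (hp₃ : poch (a - c) (j + 1) ≠ 0) (hp₄ : poch (2 * a + 1) j ≠ 0)
    (hp₅ : poch (2 * c + 1) j ≠ 0) (hp₆ : poch a j ≠ 0)
    (hp₇ : poch (2 * a + 1 + j) j ≠ 0) (hp₈ : poch (a - c + 1) j ≠ 0)
    (hp₉ : poch (a + c + j + 1) j ≠ 0) (hp₁₀ : poch c j ≠ 0)
    (hp₁₁ : poch (2 * c + 1 + j) j ≠ 0) (hp₁₂ : poch (c - a + 1) j ≠ 0) :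
    (∑ s ∈ Finset.range (j + 1), wOdd j a c α (2 * s)) = 1 - α ∧
    (∑ s ∈ Finset.range (j + 1), wOdd j a c α (2 * s + 1)) = α := by
  have ha0 : a ≠ 0 := by
    have := poch_factor_ne_zero' hp₆ (i := 0) (by omega); simpa using this
  have hc0 : c ≠ 0 := by
    have := poch_factor_ne_zero' hp₁₀ (i := 0) (by omega); simpa using this
  have hch : ((Nat.choose (2*j) j : ℕ) : ℝ) ≠ 0 :=
    Nat.cast_ne_zero.mpr (Nat.choose_pos (by omega)).ne'
  have hjf : ((j.factorial : ℕ) : ℝ) ≠ 0 := Nat.cast_ne_zero.mpr (Nat.factorial_ne_zero _)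
  have hsgn : ((-1 : ℝ))^(j+1) ≠ 0 := pow_ne_zero _ (by norm_num)
  have hE1 : poch (a+c) (2*j+1) = poch (a+c) (j+1) * poch (a+c+(j:ℝ)+1) j := by
    rw [show 2*j+1 = (j+1)+j from by omega, poch_add',
      show (a+c+((j+1:ℕ):ℝ)) = a+c+(j:ℝ)+1 from by push_cast; ring]
  have hE3 : ((j.factorial : ℕ) : ℝ) * poch ((j:ℝ)+1) j = (((2*j).factorial : ℕ) : ℝ) := by
    have := poch_nat_factorial' j j
    rw [show j+j = 2*j from by omega] at this
    exact this
  have hE4 : ((Nat.choose (2*j) j : ℕ) : ℝ) * (j.factorial : ℕ) * (j.factorial : ℕ)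
      = (((2*j).factorial : ℕ) : ℝ) := by
    have h := Nat.choose_mul_factorial_mul_factorial (show j ≤ 2*j by omega)
    rw [show 2*j - j = j from by omega] at h
    exact_mod_cast congrArg (Nat.cast (R := ℝ)) h
  have hpj : poch ((j:ℝ)+1) j = ((Nat.choose (2*j) j : ℕ) : ℝ) * (j.factorial : ℕ) := by
    apply mul_left_cancel₀ hjf
    rw [hE3, ← hE4]; ring
  constructor
  · -- even part
    have hA : (2*a : ℝ) ≠ 0 := by intro h; exact ha0 (by linarith)
    have hfacA : ∀ k : ℕ, 1 ≤ k → k ≤ 2*j → (2*a) + (k:ℝ) ≠ 0 := by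
      intro k hk1 hk2
      by_cases hkj : k ≤ j
      · obtain ⟨m, rfl⟩ : ∃ m, k = m+1 := ⟨k-1, by omega⟩
        have := poch_factor_ne_zero' hp₄ (i := m) (by omega)
        intro h; apply this; push_cast at h ⊢; linarith
      · obtain ⟨m, rfl⟩ : ∃ m, k = j + (m+1) := ⟨k - j - 1, by omega⟩
        have := poch_factor_ne_zero' hp₇ (i := m) (by omega)
        intro h; apply this; push_cast at h ⊢; linarith
    have hBA : ∀ i : ℕ, i < j → 1+(2*a)-(a-c-(j:ℝ))+(i:ℝ) ≠ 0 := by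
      intro i hi
      have := poch_factor_ne_zero' hp₉ hi
      intro h; apply this; linarith
    have hCA : ∀ i : ℕ, i < j → 1+(2*a)-(a+c)+(i:ℝ) ≠ 0 := by
      intro i hi
      have := poch_factor_ne_zero' hp₈ hi
      intro h; apply this; linarith
    have hsumA := dougall (2*a) (a-c-(j:ℝ)) (a+c) j hA hfacA hBA hCA j le_rfl
    have hwt : ∀ s ∈ Finset.range (j+1),
        wOdd j a c α (2*s)
          = (2*(1-α)*kappaOdd j a c / (poch (a+c) (j+1) * poch (c-a) (j+1) * poch (2*a+1) j))
            * tD (2*a) (a-c-(j:ℝ)) (a+c) j s := by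
      intro s hs
      have hsle : s ≤ j := by have := Finset.mem_range.mp hs; omega
      have hsmod : (2*s) % 2 = 0 := by omega
      have hsdiv : (2*s) / 2 = s := by omega
      simp only [wOdd, if_pos hsmod, hsdiv, tD]
      rw [show (1+2*a+(j:ℝ)) = 2*a+1+(j:ℝ) from by ring,
        show (1+2*a-(a-c-(j:ℝ))) = a+c+(j:ℝ)+1 from by ring,
        show (1+2*a-(a+c)) = a-c+1 from by ring]
      have hPa : poch a s ≠ 0 := poch_ne_zero_of_le' hp₆ hsle
      have hQ1 : poch (2*a+1+(j:ℝ)) s ≠ 0 := poch_ne_zero_of_le' hp₇ hsle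
      have hQ2 : poch (a-c+1) s ≠ 0 := poch_ne_zero_of_le' hp₈ hsle
      have hQ3 : poch (a+c+(j:ℝ)+1) s ≠ 0 := poch_ne_zero_of_le' hp₉ hsle
      have hfs : ((s.factorial : ℕ) : ℝ) ≠ 0 := Nat.cast_ne_zero.mpr (Nat.factorial_ne_zero _)
      have hfax : poch (a+1) s = poch a s * (a + (s:ℝ)) / a := by
        rw [eq_div_iff ha0]; linear_combination poch_mul' a s
      rw [hfax]
      have hD1 : poch (a+c) (j+1) * poch (c-a) (j+1) * poch (2*a+1) j ≠ 0 :=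
        mul_ne_zero (mul_ne_zero hp₁ hp₂) hp₄
      field_simp
    rw [Finset.sum_congr rfl hwt, ← Finset.mul_sum, hsumA,
      show (1+2*a-(a-c-(j:ℝ))-(a+c)) = (j:ℝ)+1 from by ring,
      show (1+2*a-(a-c-(j:ℝ))) = a+c+(j:ℝ)+1 from by ring,
      show (1+2*a-(a+c)) = a-c+1 from by ring,
      show (1+2*a : ℝ) = 2*a+1 from by ring, hpj]
    have hE2 : poch (a-c-(j:ℝ)) (2*j+1)
        = (-1 : ℝ)^(j+1) * (poch (c-a) (j+1) * poch (a-c+1) j) := by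
      rw [show 2*j+1 = j+(j+1) from by omega, poch_add',
        show (a-c-(j:ℝ)+(j:ℝ)) = a-c from by ring,
        poch_reflect' j (a-c-(j:ℝ)),
        show (-(a-c-(j:ℝ)) - (j:ℝ) + 1) = c-a+1 from by ring,
        poch_succ_left' (a-c) j, poch_succ_left' (c-a) j, pow_succ]
      ring
    simp only [kappaOdd]
    rw [hE1, hE2, pow_succ]
    have h8 : poch (a-c+1) j ≠ 0 := hp₈
    have h9 : poch (a+c+(j:ℝ)+1) j ≠ 0 := hp₉
    have hs9 : ((-1:ℝ))^j ≠ 0 := pow_ne_zero _ (by norm_num)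
    field_simp
  · -- odd part
    have hA : (2*c : ℝ) ≠ 0 := by intro h; exact hc0 (by linarith)
    have hfacC : ∀ k : ℕ, 1 ≤ k → k ≤ 2*j → (2*c) + (k:ℝ) ≠ 0 := by
      intro k hk1 hk2
      by_cases hkj : k ≤ j
      · obtain ⟨m, rfl⟩ : ∃ m, k = m+1 := ⟨k-1, by omega⟩
        have := poch_factor_ne_zero' hp₅ (i := m) (by omega)
        intro h; apply this; push_cast at h ⊢; linarith
      · obtain ⟨m, rfl⟩ : ∃ m, k = j + (m+1) := ⟨k - j - 1, by omega⟩
        have := poch_factor_ne_zero' hp₁₁ (i := m) (by omega)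
        intro h; apply this; push_cast at h ⊢; linarith
    have hBC : ∀ i : ℕ, i < j → 1+(2*c)-(c-a-(j:ℝ))+(i:ℝ) ≠ 0 := by
      intro i hi
      have := poch_factor_ne_zero' hp₉ hi
      intro h; apply this; linarith
    have hCC : ∀ i : ℕ, i < j → 1+(2*c)-(a+c)+(i:ℝ) ≠ 0 := by
      intro i hi
      have := poch_factor_ne_zero' hp₁₂ hi
      intro h; apply this; linarith
    have hsumC := dougall (2*c) (c-a-(j:ℝ)) (a+c) j hA hfacC hBC hCC j le_rfl
    have hwt : ∀ s ∈ Finset.range (j+1),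
        wOdd j a c α (2*s+1)
          = (-2*α*kappaOdd j a c / (poch (a+c) (j+1) * poch (a-c) (j+1) * poch (2*c+1) j))
            * tD (2*c) (c-a-(j:ℝ)) (a+c) j s := by
      intro s hs
      have hsle : s ≤ j := by have := Finset.mem_range.mp hs; omega
      have hsmod : ¬((2*s+1) % 2 = 0) := by omega
      have hsdiv : (2*s+1) / 2 = s := by omega
      simp only [wOdd, if_neg hsmod, hsdiv, tD]
      rw [show (1+2*c+(j:ℝ)) = 2*c+1+(j:ℝ) from by ring,
        show (1+2*c-(c-a-(j:ℝ))) = a+c+(j:ℝ)+1 from by ring,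
        show (1+2*c-(a+c)) = c-a+1 from by ring]
      have hPc : poch c s ≠ 0 := poch_ne_zero_of_le' hp₁₀ hsle
      have hQ1 : poch (2*c+1+(j:ℝ)) s ≠ 0 := poch_ne_zero_of_le' hp₁₁ hsle
      have hQ2 : poch (c-a+1) s ≠ 0 := poch_ne_zero_of_le' hp₁₂ hsle
      have hQ3 : poch (a+c+(j:ℝ)+1) s ≠ 0 := poch_ne_zero_of_le' hp₉ hsle
      have hfs : ((s.factorial : ℕ) : ℝ) ≠ 0 := Nat.cast_ne_zero.mpr (Nat.factorial_ne_zero _)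
      have hfax : poch (c+1) s = poch c s * (c + (s:ℝ)) / c := by
        rw [eq_div_iff hc0]; linear_combination poch_mul' c s
      rw [hfax]
      have hD1 : poch (a+c) (j+1) * poch (a-c) (j+1) * poch (2*c+1) j ≠ 0 :=
        mul_ne_zero (mul_ne_zero hp₁ hp₃) hp₅
      field_simp
    rw [Finset.sum_congr rfl hwt, ← Finset.mul_sum, hsumC,
      show (1+2*c-(c-a-(j:ℝ))-(a+c)) = (j:ℝ)+1 from by ring,
      show (1+2*c-(c-a-(j:ℝ))) = a+c+(j:ℝ)+1 from by ring,
      show (1+2*c-(a+c)) = c-a+1 from by ring,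
      show (1+2*c : ℝ) = 2*c+1 from by ring, hpj]
    have hE2 : poch (a-c-(j:ℝ)) (2*j+1)
        = (-1 : ℝ)^j * (poch (a-c) (j+1) * poch (c-a+1) j) := by
      rw [show 2*j+1 = j+(j+1) from by omega, poch_add',
        show (a-c-(j:ℝ)+(j:ℝ)) = a-c from by ring,
        poch_reflect' j (a-c-(j:ℝ)),
        show (-(a-c-(j:ℝ)) - (j:ℝ) + 1) = c-a+1 from by ring,
        poch_succ_left' (a-c) j]
      ring
    simp only [kappaOdd]
    rw [hE1, hE2, pow_succ]
    have h12 : poch (c-a+1) j ≠ 0 := hp₁₂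
    have h9 : poch (a+c+(j:ℝ)+1) j ≠ 0 := hp₉
    have hs9 : ((-1:ℝ))^j ≠ 0 := pow_ne_zero _ (by norm_num)
    field_simp
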